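/- For real numbers λ₁,…,λₙ (n > 1), if H₁, H₂, …, H_r > 0 for some 1 < r ≤ n, then H₁ ≥ H₂^{1/2} ≥ H₃^{1/3} ≥ ⋯ ≥ H_r^{1/r}. -/

import Mathlib

open Finset Polynomial

lemma newton_exists_fn (s : Multiset ℝ) : ∃ g : Fin (Multiset.card s) → ℝ,
    Multiset.map g Finset.univ.val = s := by
  refine ⟨fun i => s.toList.get (Fin.cast (by simp) i), ?_⟩
  have h1 : (Finset.univ.val : Multiset (Fin (Multiset.card s)))
      = ↑(List.finRange (Multiset.card s)) := rfl
  rw [h1, Multiset.map_coe, ← List.ofFn_eq_map]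
  conv_rhs => rw [← Multiset.coe_toList s]
  congr 1
  rw [← List.ofFn_congr (by simp) s.toList.get, List.ofFn_get]

lemma newton_exists_fn' (s : Multiset ℝ) (n : ℕ) (h : Multiset.card s = n) :
    ∃ g : Fin n → ℝ, Multiset.map g Finset.univ.val = s := by
  subst h; exact newton_exists_fn s

lemma newton_two_mul_choose_two (n : ℕ) : 2 * n.choose 2 = n * (n - 1) := by
  induction n with
  | zero => simp
  | succ m ih =>
    rw [Nat.choose_succ_succ, Nat.mul_add, ih, Nat.choose_one_right]
    rcases m with _ | p
    · simp
    · simp [Nat.succ_sub_one]; ring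

lemma newton_pair_sum {ι : Type*} [DecidableEq ι] (S : Finset ι) (Q : ι → ℝ) :
    2 * ∑ t ∈ S.powersetCard 2, ∏ i ∈ t, Q i
      = (∑ i ∈ S, Q i)^2 - ∑ i ∈ S, (Q i)^2 := by
  induction S using Finset.induction with
  | empty => rw [Finset.powersetCard_eq_empty.2 (by simp)]; simp
  | insert _ _ ha ih =>
    rename_i a S
    rw [Finset.powersetCard_succ_insert ha, Finset.sum_union, Finset.sum_image,
      Finset.sum_insert ha, Finset.sum_insert ha]
    · have h1 : ∀ t ∈ S.powersetCard 1, ∏ i ∈ insert a t, Q i = Q a * ∏ i ∈ t, Q i := by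
        intro t ht
        rw [Finset.mem_powersetCard] at ht
        exact Finset.prod_insert (fun hat => ha (ht.1 hat))
      rw [Finset.sum_congr rfl h1, ← Finset.mul_sum]
      have h2 : ∑ t ∈ S.powersetCard 1, ∏ i ∈ t, Q i = ∑ i ∈ S, Q i := by
        rw [Finset.powersetCard_one, Finset.sum_map]
        simp
      rw [h2]
      nlinarith [ih]
    · intro t ht u hu htu
      rw [Finset.mem_coe, Finset.mem_powersetCard] at ht hu
      have : ∀ v : Finset ι, v ⊆ S → (insert a v).erase a = v := by
        intro v hv
        rw [Finset.erase_insert (fun hav => ha (hv hav))]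
      rw [← this t ht.1, ← this u hu.1, htu]
    · rw [Finset.disjoint_right]
      intro t ht hts
      simp only [Finset.mem_image] at ht
      obtain ⟨u, hu, rfl⟩ := ht
      rw [Finset.mem_powersetCard] at hts
      exact ha (hts.1 (Finset.mem_insert_self a u))

lemma newton_sum_powersetCard_compl {ι : Type*} [DecidableEq ι] (S : Finset ι) (j : ℕ)
    (hj : j ≤ S.card) (F : Finset ι → ℝ) :
    ∑ t ∈ S.powersetCard (S.card - j), F t = ∑ u ∈ S.powersetCard j, F (S \ u) := by
  refine Finset.sum_nbij' (fun t => S \ t) (fun u => S \ u) ?_ ?_ ?_ ?_ ?_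
  · intro t ht
    rw [Finset.mem_powersetCard] at ht ⊢
    exact ⟨Finset.sdiff_subset, by rw [Finset.card_sdiff_of_subset ht.1, ht.2]; omega⟩
  · intro u hu
    rw [Finset.mem_powersetCard] at hu ⊢
    exact ⟨Finset.sdiff_subset, by rw [Finset.card_sdiff_of_subset hu.1, hu.2]⟩
  · intro t ht
    rw [Finset.mem_powersetCard] at ht
    exact Finset.sdiff_sdiff_eq_self ht.1
  · intro u hu
    rw [Finset.mem_powersetCard] at hu
    exact Finset.sdiff_sdiff_eq_self hu.1
  · intro t ht
    rw [Finset.mem_powersetCard] at ht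
    rw [Finset.sdiff_sdiff_eq_self ht.1]

lemma newton_base (k : ℕ) (g : Fin (k+2) → ℝ) :
    (∑ t ∈ (univ : Finset (Fin (k+2))).powersetCard k, ∏ i ∈ t, g i) *
    (∑ t ∈ (univ : Finset (Fin (k+2))).powersetCard (k+2), ∏ i ∈ t, g i) *
    (((k+2).choose (k+1) : ℝ))^2 ≤
    (∑ t ∈ (univ : Finset (Fin (k+2))).powersetCard (k+1), ∏ i ∈ t, g i)^2 *
    ((k+2).choose k) * ((k+2).choose (k+2)) := by
  set Q : Fin (k+2) → ℝ := fun i => ∏ j ∈ univ.erase i, g j with hQ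
  have hen : (∑ t ∈ (univ : Finset (Fin (k+2))).powersetCard (k+2), ∏ i ∈ t, g i)
      = ∏ i, g i := by
    have h := Finset.powersetCard_self (univ : Finset (Fin (k+2)))
    rw [Finset.card_fin] at h
    rw [h, Finset.sum_singleton]
  have hen1 : (∑ t ∈ (univ : Finset (Fin (k+2))).powersetCard (k+1), ∏ i ∈ t, g i)
      = ∑ i, Q i := by
    have h := newton_sum_powersetCard_compl (univ : Finset (Fin (k+2))) 1 (by simp)
      (fun t => ∏ i ∈ t, g i)
    rw [Finset.card_fin, show k+2-1 = k+1 from rfl] at h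
    rw [h, Finset.powersetCard_one, Finset.sum_map]
    apply Finset.sum_congr rfl
    intro i _
    simp only [Function.Embedding.coeFn_mk, Finset.sdiff_singleton_eq_erase]
    rfl
  have hkey : (∑ t ∈ (univ : Finset (Fin (k+2))).powersetCard k, ∏ i ∈ t, g i) * (∏ i, g i)
      = ∑ t ∈ (univ : Finset (Fin (k+2))).powersetCard 2, ∏ i ∈ t, Q i := by
    have h := newton_sum_powersetCard_compl (univ : Finset (Fin (k+2))) 2 (by simp)
      (fun t => ∏ i ∈ t, g i)
    rw [Finset.card_fin, Nat.add_sub_cancel] at h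
    rw [h, Finset.sum_mul]
    apply Finset.sum_congr rfl
    intro u hu
    rw [Finset.mem_powersetCard] at hu
    obtain ⟨i, j, hij, rfl⟩ := Finset.card_eq_two.1 hu.2
    have hset : (univ : Finset (Fin (k+2))) \ {i, j} = (univ.erase i).erase j := by
      ext x
      simp only [Finset.mem_sdiff, Finset.mem_univ, Finset.mem_insert, Finset.mem_singleton,
        Finset.mem_erase, true_and]
      tauto
    have hji : j ∈ (univ : Finset (Fin (k+2))).erase i :=
      Finset.mem_erase.2 ⟨hij.symm, Finset.mem_univ j⟩
    have hij' : i ∈ (univ : Finset (Fin (k+2))).erase j :=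
      Finset.mem_erase.2 ⟨hij, Finset.mem_univ i⟩
    have hQi : Q i = g j * ∏ x ∈ (univ.erase i).erase j, g x :=
      (Finset.mul_prod_erase _ g hji).symm
    have hQj : Q j = g i * ∏ x ∈ (univ.erase j).erase i, g x :=
      (Finset.mul_prod_erase _ g hij').symm
    have hcomm : ((univ : Finset (Fin (k+2))).erase j).erase i = (univ.erase i).erase j := by
      ext x; simp only [Finset.mem_erase, Finset.mem_univ, and_true]; tauto
    have hprod : (∏ x, g x) = g i * Q i := (Finset.mul_prod_erase _ g (Finset.mem_univ i)).symm
    rw [Finset.prod_pair hij, hset, hprod, hQi, hQj, hcomm]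
    ring
  have hcs : (∑ i, Q i)^2 ≤ ((k+2 : ℕ) : ℝ) * ∑ i, (Q i)^2 := by
    have h := sq_sum_le_card_mul_sum_sq (s := (univ : Finset (Fin (k+2)))) (f := Q)
    rw [Finset.card_fin] at h
    exact_mod_cast h
  have hps := newton_pair_sum (univ : Finset (Fin (k+2))) Q
  have hc1 : (((k+2).choose (k+1) : ℕ) : ℝ) = ((k+2 : ℕ) : ℝ) := by
    have h := Nat.choose_symm (show 1 ≤ k+2 by omega)
    rw [show k+2-1 = k+1 by omega] at h
    rw [h, Nat.choose_one_right]
  have hc2 : (2 : ℝ) * ((k+2).choose k : ℝ) = ((k+2:ℕ) : ℝ) * (((k+2:ℕ)) - 1 : ℝ) := by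
    have h0 : (k+2).choose k = (k+2).choose 2 := by
      have h := Nat.choose_symm (show k ≤ k+2 by omega)
      rw [show k+2-k = 2 by omega] at h
      exact h.symm
    have h2 := newton_two_mul_choose_two (k+2)
    rw [h0]
    calc (2:ℝ) * ((k+2).choose 2 : ℝ) = ((2 * (k+2).choose 2 : ℕ) : ℝ) := by push_cast; ring
    _ = (((k+2) * ((k+2)-1) : ℕ) : ℝ) := by rw [h2]
    _ = ((k+2:ℕ):ℝ) * (((k+2:ℕ):ℝ) - 1) := by
        push_cast [Nat.cast_sub (show 1 ≤ k+2 by omega)]; ring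
  rw [hen, hen1, Nat.choose_self, hc1]
  push_cast at hc2 hcs ⊢
  nlinarith [hcs, hps, hkey, sq_nonneg (∑ i, Q i),
    mul_le_mul_of_nonneg_left hcs (show (0:ℝ) ≤ (k:ℝ)+2 by positivity)]

lemma newton_choose_shift (d j : ℕ) (hj : j ≤ d) :
    (d + 1) * d.choose j = ((d - j) + 1) * (d + 1).choose j := by
  have h1 := Nat.add_one_mul_choose_eq d j
  have h2 := Nat.choose_succ_right_eq (d + 1) j
  rw [show (d + 1) - j = (d - j) + 1 by omega] at h2
  rw [h1, h2, Nat.mul_comm]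

theorem newton_ms (n : ℕ) : ∀ k : ℕ, k + 2 ≤ n → ∀ s : Multiset ℝ, Multiset.card s = n →
    s.esymm k * s.esymm (k+2) * (n.choose (k+1) : ℝ)^2 ≤
    s.esymm (k+1)^2 * (n.choose k : ℝ) * (n.choose (k+2) : ℝ) := by
  induction n using Nat.strong_induction_on with
  | _ n IH =>
  intro k hk s hs
  rcases eq_or_lt_of_le hk with heq | hlt
  · subst heq
    obtain ⟨g, hg⟩ := newton_exists_fn' s (k+2) hs
    rw [← hg]
    simp only [Finset.esymm_map_val]
    exact newton_base k g
  · obtain ⟨d, rfl⟩ : ∃ d, n = d + 1 := ⟨n - 1, by omega⟩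
    have hkd : k + 2 ≤ d := by omega
    set f : Polynomial ℝ := (s.map fun r => X + C r).prod with hf
    have hf_eq : f = ((s.map fun r => -r).map fun r => X - C r).prod := by
      rw [hf, Multiset.map_map]
      congr 1
      apply Multiset.map_congr rfl
      intro x _
      simp [sub_neg_eq_add]
    have hroots : f.roots = s.map fun r => -r := by
      rw [hf_eq, roots_multiset_prod_X_sub_C]
    have hfmonic : f.Monic := by
      apply monic_multiset_prod_of_monic
      intro r _
      exact monic_X_add_C r
    have hfdeg : f.natDegree = d + 1 := by
      rw [hf_eq, natDegree_multiset_prod_X_sub_C_eq_card, Multiset.card_map, hs]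
    set g : Polynomial ℝ := derivative f with hgdef
    have hgtop : g.coeff d = (d + 1 : ℝ) := by
      rw [hgdef, coeff_derivative]
      have : f.coeff (d + 1) = 1 := by
        have := hfmonic.coeff_natDegree
        rwa [hfdeg] at this
      rw [this, one_mul]
    have hgne : g ≠ 0 := fun h => by
      rw [h, Polynomial.coeff_zero] at hgtop
      have : (0:ℝ) < d + 1 := by positivity
      linarith [hgtop]
    have hdeg : g.natDegree = d := by
      refine le_antisymm ?_ ?_
      · have := natDegree_derivative_le f
        rwa [hfdeg, Nat.add_sub_cancel] at this
      · exact le_natDegree_of_ne_zero (by rw [hgtop]; positivity)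
    have hlead : g.leadingCoeff = (d + 1 : ℝ) := by
      rw [Polynomial.leadingCoeff, hdeg, hgtop]
    have hcroots : Multiset.card g.roots = d := by
      refine le_antisymm (hdeg ▸ card_roots' g) ?_
      have h1 : Multiset.card f.roots ≤ Multiset.card g.roots + 1 :=
        Polynomial.card_roots_le_derivative f
      rw [hroots, Multiset.card_map, hs] at h1
      omega
    set t : Multiset ℝ := g.roots.map fun r => -r with ht_def
    have hct : Multiset.card t = d := by rw [ht_def, Multiset.card_map, hcroots]
    have ht : ∀ m : ℕ, m ≤ d →
        ((d + 1 : ℕ) : ℝ) * t.esymm m = (((d - m) + 1 : ℕ) : ℝ) * s.esymm m := by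
      intro m hm
      have hco := Polynomial.coeff_eq_esymm_roots_of_card
        (p := g) (by rw [hcroots, hdeg]) (k := d - m) (by rw [hdeg]; omega)
      rw [hdeg, hlead, show d - (d - m) = m by omega] at hco
      have hfd : g.coeff (d - m) = f.coeff ((d - m) + 1) * ((d - m : ℕ) + 1 : ℝ) := by
        rw [hgdef, coeff_derivative]
      have hfc : f.coeff ((d - m) + 1) = s.esymm m := by
        rw [hf, Multiset.prod_X_add_C_coeff s (by rw [hs]; omega), hs,
          show (d + 1) - ((d - m) + 1) = m by omega]
      have htm : t.esymm m = (-1 : ℝ)^m * g.roots.esymm m := by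
        rw [ht_def, Multiset.esymm_neg]
      push_cast
      rw [htm]
      calc ((d:ℝ) + 1) * ((-1:ℝ)^m * g.roots.esymm m)
          = ((d:ℝ) + 1) * (-1:ℝ)^m * g.roots.esymm m := by ring
        _ = g.coeff (d - m) := hco.symm
        _ = f.coeff (d - m + 1) * ((↑(d - m) : ℝ) + 1) := hfd
        _ = ((↑(d - m) : ℝ) + 1) * s.esymm m := by rw [hfc]; ring
    have hIH := IH d (by omega) k hkd t hct
    set N : ℝ := ((d + 1 : ℕ) : ℝ) with hN
    have hNpos : (0:ℝ) < N := by rw [hN]; positivity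
    set a := s.esymm k
    set b := s.esymm (k+2)
    set m := s.esymm (k+1)
    set α : ℝ := (((d - k) + 1 : ℕ) : ℝ) with hα
    set γ : ℝ := (((d - (k+1)) + 1 : ℕ) : ℝ) with hγ
    set β : ℝ := (((d - (k+2)) + 1 : ℕ) : ℝ) with hβ
    have hαpos : (0:ℝ) < α := by rw [hα]; positivity
    have hγpos : (0:ℝ) < γ := by rw [hγ]; positivity
    have hβpos : (0:ℝ) < β := by rw [hβ]; positivity
    have hta := ht k (by omega)
    have htb := ht (k+2) (by omega)
    have htm' := ht (k+1) (by omega)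
    have hcc : ∀ j : ℕ, j ≤ d → N * (d.choose j : ℝ)
        = (((d - j) + 1 : ℕ) : ℝ) * ((d+1).choose j : ℝ) := by
      intro j hj
      rw [hN]
      have hcs := newton_choose_shift d j hj
      calc ((d+1:ℕ):ℝ) * (d.choose j : ℝ) = (((d+1) * d.choose j : ℕ) : ℝ) := by push_cast; ring
      _ = ((((d - j) + 1) * (d + 1).choose j : ℕ) : ℝ) := by rw [hcs]
      _ = _ := by push_cast; ring
    have hc0 := hcc k (by omega)
    have hc1 := hcc (k+1) (by omega)
    have hc2 := hcc (k+2) (by omega)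
    have h4 : N^4 * (t.esymm k * t.esymm (k+2) * ((d.choose (k+1) : ℝ))^2)
        ≤ N^4 * (t.esymm (k+1)^2 * (d.choose k : ℝ) * (d.choose (k+2) : ℝ)) :=
      mul_le_mul_of_nonneg_left hIH (by positivity)
    have hL : N^4 * (t.esymm k * t.esymm (k+2) * ((d.choose (k+1) : ℝ))^2)
        = (N * t.esymm k) * (N * t.esymm (k+2)) * (N * (d.choose (k+1) : ℝ))^2 := by ring
    have hR : N^4 * (t.esymm (k+1)^2 * (d.choose k : ℝ) * (d.choose (k+2) : ℝ))
        = (N * t.esymm (k+1))^2 * (N * (d.choose k : ℝ)) * (N * (d.choose (k+2) : ℝ)) := by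
      ring
    rw [hL, hR, hta, htb, htm', hc0, hc1, hc2] at h4
    have hfin : (α * β * γ^2) * (a * b * (((d+1).choose (k+1) : ℝ))^2)
        ≤ (α * β * γ^2) * (m^2 * ((d+1).choose k : ℝ) * ((d+1).choose (k+2) : ℝ)) := by
      calc (α * β * γ^2) * (a * b * (((d+1).choose (k+1) : ℝ))^2)
          = (α * a) * (β * b) * (γ * ((d+1).choose (k+1) : ℝ))^2 := by ring
        _ ≤ (γ * m)^2 * (α * ((d+1).choose k : ℝ)) * (β * ((d+1).choose (k+2) : ℝ)) := h4
        _ = (α * β * γ^2) * (m^2 * ((d+1).choose k : ℝ) * ((d+1).choose (k+2) : ℝ)) := by ring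
    have hdone := le_of_mul_le_mul_left hfin (by positivity)
    push_cast at hdone ⊢
    convert hdone using 2 <;> push_cast <;> ring

/-- The `r`-th elementary symmetric polynomial of `λ₁, …, λₙ`. -/
noncomputable def esymm (n r : ℕ) (l : Fin n → ℝ) : ℝ :=
  ∑ s ∈ (Finset.univ : Finset (Fin n)).powersetCard r, ∏ i ∈ s, l i

/-- If `H₁, …, H_r > 0`, then `H₁ ≥ H₂^{1/2} ≥ ⋯ ≥ H_r^{1/r}`. -/
theorem newton_chain_inequality (n : ℕ) (hn : 1 < n) (l : Fin n → ℝ)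
    (H : ℕ → ℝ) (hH : ∀ r, H r = esymm n r l / (n.choose r))
    (r : ℕ) (hr1 : 1 < r) (hrn : r ≤ n)
    (hpos : ∀ j : ℕ, 1 ≤ j → j ≤ r → 0 < H j) :
    ∀ j : ℕ, 1 ≤ j → j < r →
      (H (j + 1)) ^ ((1 : ℝ) / (j + 1)) ≤ (H j) ^ ((1 : ℝ) / j) := by
  -- the multiset of the λᵢ
  set s : Multiset ℝ := Finset.univ.val.map l with hsdef
  have hs : Multiset.card s = n := by
    rw [hsdef, Multiset.card_map]
    simp
  have hes : ∀ j, esymm n j l = s.esymm j := by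
    intro j
    rw [hsdef, Finset.esymm_map_val]
    rfl
  -- Newton's inequality for the normalized means
  have newton : ∀ k : ℕ, k + 2 ≤ n → H k * H (k+2) ≤ H (k+1)^2 := by
    intro k hk
    have hms := newton_ms n k hk s hs
    have hC0 : (0:ℝ) < (n.choose k : ℝ) := by
      exact_mod_cast Nat.choose_pos (by omega)
    have hC1 : (0:ℝ) < (n.choose (k+1) : ℝ) := by
      exact_mod_cast Nat.choose_pos (by omega)
    have hC2 : (0:ℝ) < (n.choose (k+2) : ℝ) := by
      exact_mod_cast Nat.choose_pos (by omega)
    rw [hH k, hH (k+1), hH (k+2), hes k, hes (k+1), hes (k+2)]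
    rw [div_mul_div_comm, div_pow, div_le_div_iff₀ (by positivity) (by positivity)]
    nlinarith [hms]
  have hH0 : H 0 = 1 := by
    rw [hH 0]
    have : esymm n 0 l = 1 := by
      rw [esymm, Finset.powersetCard_zero, Finset.sum_singleton, Finset.prod_empty]
    rw [this, Nat.choose_zero_right]
    norm_num
  -- the chain H_{j+1}^j ≤ H_j^{j+1}
  have chain : ∀ j : ℕ, 1 ≤ j → j < r → H (j+1) ^ j ≤ H j ^ (j+1) := by
    intro j
    induction j with
    | zero => omega
    | succ i ih =>
      intro _ hir
      rcases Nat.eq_zero_or_pos i with hi0 | hi1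
      · subst hi0
        have h2 := newton 0 (by omega)
        rw [hH0, one_mul] at h2
        simpa using h2
      · have hIH := ih hi1 (by omega)
        have hx : 0 < H i := hpos i hi1 (by omega)
        have hy : 0 < H (i+1) := hpos (i+1) (by omega) (by omega)
        have hz : 0 < H (i+2) := hpos (i+2) (by omega) (by omega)
        have hN := newton i (by omega)
        -- (H i * H (i+2))^(i+1) ≤ (H(i+1)^2)^(i+1)
        have hp : (H i * H (i+2))^(i+1) ≤ (H (i+1)^2)^(i+1) :=
          pow_le_pow_left₀ (by positivity) hN (i+1)
        rw [mul_pow, ← pow_mul] at hp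
        have hkey : H (i+2)^(i+1) * H (i+1)^i ≤ H (i+1)^(i+2) * H (i+1)^i := by
          calc H (i+2)^(i+1) * H (i+1)^i
              ≤ H (i+2)^(i+1) * H i ^(i+1) := by
                exact mul_le_mul_of_nonneg_left hIH (by positivity)
            _ = H i ^(i+1) * H (i+2)^(i+1) := by ring
            _ ≤ H (i+1)^(2*(i+1)) := hp
            _ = H (i+1)^(i+2) * H (i+1)^i := by rw [← pow_add]; congr 1; omega
        have := le_of_mul_le_mul_right hkey (by positivity)
        exact_mod_cast this
  -- convert to rpow
  intro j hj1 hjr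
  have hx : 0 < H j := hpos j hj1 (by omega)
  have hy : 0 < H (j+1) := hpos (j+1) (by omega) (by omega)
  have hc := chain j hj1 hjr
  have hrp : H (j+1) ^ ((j:ℝ)) ≤ H j ^ ((j:ℝ)+1) := by
    rw [show ((j:ℝ)+1) = ((j+1 : ℕ) : ℝ) by push_cast; ring,
      Real.rpow_natCast, Real.rpow_natCast]
    exact_mod_cast hc
  have hjR : (0:ℝ) < (j:ℝ) := by exact_mod_cast hj1
  have hstep := Real.rpow_le_rpow (by positivity) hrp
    (show (0:ℝ) ≤ 1/((j:ℝ)*((j:ℝ)+1)) by positivity)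
  have e1 : (j:ℝ) * (1/((j:ℝ)*((j:ℝ)+1))) = 1/((j:ℝ)+1) := by
    field_simp
  have e2 : ((j:ℝ)+1) * (1/((j:ℝ)*((j:ℝ)+1))) = 1/(j:ℝ) := by
    field_simp
  rw [← Real.rpow_mul hy.le, ← Real.rpow_mul hx.le, e1, e2] at hstep
  convert hstep using 2 <;> push_cast <;> ring
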